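/- Assume Fix(T, P_U) ≠ ∅. Let {x^k} ⊆ ℝⁿ be a sequence with x⁰ ∈ U such that for every k, x^{k+1} is a circumcenter for x^k, i.e. x^{k+1} belongs to the affine span of {x^k, R(x^k), R_U(R(x^k))} and ‖x^{k+1} − x^k‖ = ‖x^{k+1} − R(x^k)‖ = ‖x^{k+1} − R_U(R(x^k))‖. Then x^k ∈ U for all k and {x^k} converges to a point of Fix(T, P_U). -/

import Mathlib

/-- An operator is firmly nonexpansive if
`‖T x - T y‖² ≤ ‖x - y‖² - ‖(T x - T y) - (x - y)‖²` for all `x, y`. -/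
def FirmlyNonexpansive {n : ℕ} (T : EuclideanSpace ℝ (Fin n) → EuclideanSpace ℝ (Fin n)) : Prop :=
  ∀ x y, ‖T x - T y‖ ^ 2 ≤ ‖x - y‖ ^ 2 - ‖(T x - T y) - (x - y)‖ ^ 2

/-- `P` is the orthogonal projection onto `C`: for each `x`, `P x ∈ C` and `P x`
minimizes the distance from `x` to points of `C`. -/
def IsProjOn {n : ℕ} (C : Set (EuclideanSpace ℝ (Fin n)))
    (P : EuclideanSpace ℝ (Fin n) → EuclideanSpace ℝ (Fin n)) : Prop :=
  ∀ x, P x ∈ C ∧ ∀ y ∈ C, ‖x - P x‖ ≤ ‖x - y‖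

set_option maxHeartbeats 1000000

open Filter


private lemma sq_le_imp {a b : ℝ} (ha : 0 ≤ a) (hb : 0 ≤ b) (h : a^2 ≤ b^2) : a ≤ b := by
  nlinarith

lemma crm_aux_closed {n : ℕ} (U : Set (EuclideanSpace ℝ (Fin n))) (hne : U.Nonempty)
    (hUaff : ∀ x ∈ U, ∀ y ∈ U, ∀ t : ℝ, t • x + (1 - t) • y ∈ U) : IsClosed U := by
  obtain ⟨p, hp⟩ := hne
  set V : Submodule ℝ (EuclideanSpace ℝ (Fin n)) :=
    { carrier := {v | p + v ∈ U}
      zero_mem' := by simpa using hp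
      add_mem' := by
        intro a b ha hb
        have h2a : p + (2:ℝ) • a ∈ U := by
          have := hUaff _ ha p hp (2 : ℝ)
          convert this using 1
          module
        have h2b : p + (2:ℝ) • b ∈ U := by
          have := hUaff _ hb p hp (2 : ℝ)
          convert this using 1
          module
        have := hUaff _ h2a _ h2b (1/2 : ℝ)
        show p + (a + b) ∈ U
        convert this using 1
        module
      smul_mem' := by
        intro c a ha
        have := hUaff _ ha p hp c
        show p + c • a ∈ U
        convert this using 1
        module }
  have hVc : IsClosed (V : Set (EuclideanSpace ℝ (Fin n))) :=
    Submodule.closed_of_finiteDimensional V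
  have hU : U = (fun u => u - p) ⁻¹' (V : Set (EuclideanSpace ℝ (Fin n))) := by
    ext u
    constructor
    · intro hu
      show p + (u - p) ∈ U
      simpa using hu
    · intro hu
      have : p + (u - p) ∈ U := hu
      simpa using this
  rw [hU]
  exact hVc.preimage (continuous_id.sub continuous_const)

lemma crm_aux_orth {n : ℕ} {U : Set (EuclideanSpace ℝ (Fin n))}
    (hUaff : ∀ x ∈ U, ∀ y ∈ U, ∀ t : ℝ, t • x + (1 - t) • y ∈ U)
    {PU : EuclideanSpace ℝ (Fin n) → EuclideanSpace ℝ (Fin n)} (hPU : IsProjOn U PU)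
    (w u : EuclideanSpace ℝ (Fin n)) (hu : u ∈ U) :
    (inner ℝ (w - PU w) (u - PU w) : ℝ) = 0 := by
  rcases eq_or_ne (u - PU w) 0 with h0 | h0
  · rw [h0, inner_zero_right]
  · set v := w - PU w with hv
    set d := u - PU w with hd
    set c : ℝ := inner ℝ v d with hc
    have hdn : (0:ℝ) < ‖d‖^2 := by
      have : ‖d‖ ≠ 0 := norm_ne_zero_iff.mpr h0
      positivity
    set t : ℝ := c / ‖d‖^2 with ht
    have hq : t • u + (1 - t) • PU w ∈ U := hUaff u hu (PU w) (hPU w).1 t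
    have hle : ‖w - PU w‖ ≤ ‖w - (t • u + (1 - t) • PU w)‖ := (hPU w).2 _ hq
    have heq : w - (t • u + (1 - t) • PU w) = v - t • d := by
      rw [hv, hd]; module
    have hsq : ‖v‖^2 ≤ ‖v - t • d‖^2 := by
      rw [← heq, hv]
      exact pow_le_pow_left₀ (norm_nonneg _) hle 2
    have hexp : ‖v - t • d‖^2 = ‖v‖^2 - 2 * (t * c) + t^2 * ‖d‖^2 := by
      rw [norm_sub_sq_real, real_inner_smul_right, norm_smul, mul_pow, Real.norm_eq_abs, sq_abs, ← hc]
    rw [hexp] at hsq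
    have ht2 : t * ‖d‖^2 = c := by
      rw [ht]; exact div_mul_cancel₀ c hdn.ne'
    show c = 0
    nlinarith [sq_nonneg c]

/-- reflections of firmly nonexpansive maps are nonexpansive towards fixed points -/
lemma crm_aux_Rnonexp {n : ℕ} {T : EuclideanSpace ℝ (Fin n) → EuclideanSpace ℝ (Fin n)}
    (hT : FirmlyNonexpansive T)
    {R : EuclideanSpace ℝ (Fin n) → EuclideanSpace ℝ (Fin n)}
    (hR : ∀ w, R w = (2 : ℝ) • T w - w)
    (w y : EuclideanSpace ℝ (Fin n)) (hy : T y = y) : ‖R w - y‖ ≤ ‖w - y‖ := by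
  have h := hT w y
  set a := T w - T y with hA
  set b := w - y with hB
  have hab : R w - y = (2:ℝ) • a - b := by
    rw [hR, hA, hB, hy]; module
  have hsq : ‖(2:ℝ) • a - b‖^2 = 4 * ‖a‖^2 - 4 * (inner ℝ a b : ℝ) + ‖b‖^2 := by
    rw [norm_sub_sq_real, real_inner_smul_left, norm_smul]
    norm_num
    ring
  have hsub : ‖a - b‖^2 = ‖a‖^2 - 2 * (inner ℝ a b : ℝ) + ‖b‖^2 := norm_sub_sq_real a b
  rw [hab]
  refine sq_le_imp (norm_nonneg _) (norm_nonneg _) ?_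
  rw [hsq]
  nlinarith [h, hsub]

/-- T is nonexpansive -/
lemma crm_aux_Tnonexp {n : ℕ} {T : EuclideanSpace ℝ (Fin n) → EuclideanSpace ℝ (Fin n)}
    (hT : FirmlyNonexpansive T) (a b : EuclideanSpace ℝ (Fin n)) : ‖T a - T b‖ ≤ ‖a - b‖ := by
  have h := hT a b
  refine sq_le_imp (norm_nonneg _) (norm_nonneg _) ?_
  nlinarith [sq_nonneg ‖(T a - T b) - (a - b)‖]

lemma crm_aux_mid {F : Type*} [NormedAddCommGroup F] [InnerProductSpace ℝ F]
    (a m : F) (h : ‖a‖ = ‖a - (2:ℝ) • m‖) : ‖m‖ ≤ ‖a‖ := by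
  have hsq : ‖a‖^2 = ‖a - (2:ℝ) • m‖^2 := congrArg (fun r => r^2) h
  have hexp : ‖a - (2:ℝ) • m‖^2 = ‖a‖^2 - 4 * (inner ℝ a m : ℝ) + 4 * ‖m‖^2 := by
    rw [norm_sub_sq_real, real_inner_smul_right, norm_smul, mul_pow, Real.norm_eq_abs]
    norm_num
    ring
  have ham : (inner ℝ a m : ℝ) = ‖m‖^2 := by linarith [hsq, hexp]
  have hcs : (inner ℝ a m : ℝ) ≤ ‖a‖ * ‖m‖ := real_inner_le_norm a m
  rcases eq_or_lt_of_le (norm_nonneg m) with h0 | h0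
  · rw [← h0]; exact norm_nonneg a
  · nlinarith [ham, hcs, h0]

lemma crm_step {n : ℕ} {T : EuclideanSpace ℝ (Fin n) → EuclideanSpace ℝ (Fin n)}
    (hT : FirmlyNonexpansive T)
    {U : Set (EuclideanSpace ℝ (Fin n))}
    (hUaff : ∀ x ∈ U, ∀ y ∈ U, ∀ t : ℝ, t • x + (1 - t) • y ∈ U)
    {PU : EuclideanSpace ℝ (Fin n) → EuclideanSpace ℝ (Fin n)} (hPU : IsProjOn U PU)
    {R RU : EuclideanSpace ℝ (Fin n) → EuclideanSpace ℝ (Fin n)}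
    (hR : ∀ w, R w = (2 : ℝ) • T w - w) (hRU : ∀ w, RU w = (2 : ℝ) • PU w - w)
    {x z : EuclideanSpace ℝ (Fin n)} (hxU : x ∈ U)
    (hsp : z ∈ affineSpan ℝ ({x, R x, RU (R x)} : Set (EuclideanSpace ℝ (Fin n))))
    (h1 : ‖z - x‖ = ‖z - R x‖) (h2 : ‖z - x‖ = ‖z - RU (R x)‖) :
    z ∈ U ∧ (∀ y, T y = y → y ∈ U → ‖z - y‖^2 + ‖z - x‖^2 ≤ ‖x - y‖^2) ∧
      ‖T x - x‖ ≤ ‖z - x‖ := by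
  set p := PU (R x) with hp
  set e : EuclideanSpace ℝ (Fin n) := p - x with he
  set f : EuclideanSpace ℝ (Fin n) := R x - p with hf
  have hpU : p ∈ U := (hPU (R x)).1
  have hef : (inner ℝ e f : ℝ) = 0 := by
    have h := crm_aux_orth hUaff hPU (R x) x hxU
    have : (inner ℝ e f : ℝ) = - (inner ℝ (R x - p) (x - p) : ℝ) := by
      rw [he, hf, real_inner_comm]
      rw [show p - x = -(x - p) by module, inner_neg_right]
    rw [this, h, neg_zero]
  have hRxx : R x - x = e + f := by rw [he, hf]; module
  have hRUx : RU (R x) - x = e - f := by rw [hRU, he, hf, hp]; module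
  -- decomposition of z - x
  have hzx : ∃ b c : ℝ, z - x = b • (e + f) + c • (e - f) := by
    set W := Submodule.span ℝ ({R x - x, RU (R x) - x} : Set (EuclideanSpace ℝ (Fin n))) with hW
    have hle : affineSpan ℝ ({x, R x, RU (R x)} : Set (EuclideanSpace ℝ (Fin n))) ≤
        AffineSubspace.mk' x W := by
      rw [affineSpan_le]
      rintro w hw
      simp only [Set.mem_insert_iff, Set.mem_singleton_iff] at hw
      rcases hw with rfl | rfl | rfl
      · exact AffineSubspace.self_mem_mk' _ _
      · rw [AffineSubspace.mem_coe, AffineSubspace.mem_mk']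
        exact Submodule.subset_span (by simp)
      · rw [AffineSubspace.mem_coe, AffineSubspace.mem_mk']
        exact Submodule.subset_span (by simp)
    have hzW : z - x ∈ W := by
      have h' : z ∈ AffineSubspace.mk' x W := hle hsp
      have h'' := AffineSubspace.mem_mk'.mp h'
      rwa [vsub_eq_sub] at h''
    obtain ⟨b, c, hbc⟩ := Submodule.mem_span_pair.mp hzW
    exact ⟨b, c, by rw [← hbc, hRxx, hRUx]⟩
  obtain ⟨b, c, hbc⟩ := hzx
  set s := b + c with hs
  set t := b - c with hts
  have hzx2 : z - x = s • e + t • f := by rw [hbc, hs, hts]; module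
  -- squared norms
  have hkey : ∀ a b : ℝ, ‖a • e + b • f‖^2 = a^2 * ‖e‖^2 + b^2 * ‖f‖^2 := by
    intro a b
    rw [norm_add_sq_real, real_inner_smul_left, real_inner_smul_right, hef,
      norm_smul, norm_smul, mul_pow, mul_pow, Real.norm_eq_abs, Real.norm_eq_abs,
      sq_abs, sq_abs]
    ring
  have hzRx : z - R x = (s - 1) • e + (t - 1) • f := by
    have : z - R x = (z - x) - (R x - x) := by module
    rw [this, hzx2, hRxx]; module
  have hzRUx : z - RU (R x) = (s - 1) • e + (t + 1) • f := by
    have : z - RU (R x) = (z - x) - (RU (R x) - x) := by module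
    rw [this, hzx2, hRUx]; module
  have h1sq : s^2 * ‖e‖^2 + t^2 * ‖f‖^2 = (s-1)^2 * ‖e‖^2 + (t-1)^2 * ‖f‖^2 := by
    have := congrArg (fun r => r^2) h1
    simpa [hzx2, hzRx, hkey] using this
  have h2sq : s^2 * ‖e‖^2 + t^2 * ‖f‖^2 = (s-1)^2 * ‖e‖^2 + (t+1)^2 * ‖f‖^2 := by
    have := congrArg (fun r => r^2) h2
    simpa [hzx2, hzRUx, hkey] using this
  have htF : t * ‖f‖^2 = 0 := by nlinarith [h1sq, h2sq]
  have htf : t • f = 0 := by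
    rcases eq_or_ne f 0 with h | h
    · rw [h, smul_zero]
    · have hF : ‖f‖^2 ≠ 0 := by
        have := norm_ne_zero_iff.mpr h
        positivity
      have : t = 0 := by
        rcases mul_eq_zero.mp htF with h' | h'
        · exact h'
        · exact absurd h' hF
      rw [this, zero_smul]
  have hzx3 : z - x = s • e := by rw [hzx2, htf, add_zero]
  -- the scalar relation
  obtain ⟨σ, hσ0, hσe, hσE⟩ : ∃ σ : ℝ, 0 ≤ σ ∧ z - x = σ • e ∧
      2 * σ * ‖e‖^2 = ‖e‖^2 + ‖f‖^2 := by
    have h1sq' : s^2 * ‖e‖^2 = (s-1)^2 * ‖e‖^2 + ‖f‖^2 := by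
      have := congrArg (fun r => r^2) h1
      have h2' : ‖z - x‖^2 = ‖z - R x‖^2 := this
      rw [hzx3, hzRx] at h2'
      have hL : ‖s • e‖^2 = s^2 * ‖e‖^2 := by
        rw [norm_smul, mul_pow, Real.norm_eq_abs, sq_abs]
      have hR' : ‖(s - 1) • e + (t - 1) • f‖^2 = (s-1)^2 * ‖e‖^2 + (t-1)^2 * ‖f‖^2 :=
        hkey _ _
      rw [hL, hR'] at h2'
      have htF' : (t-1)^2 * ‖f‖^2 = ‖f‖^2 := by nlinarith [htF]
      rw [htF'] at h2'
      exact h2'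
    rcases eq_or_ne (‖e‖) 0 with hE | hE
    · have he0 : e = 0 := norm_eq_zero.mp hE
      have hf0 : ‖f‖^2 = 0 := by
        have : ‖e‖^2 = 0 := by rw [hE]; ring
        nlinarith [h1sq']
      refine ⟨0, le_refl 0, ?_, ?_⟩
      · rw [hzx3, he0, smul_zero, smul_zero]
      · have hE2 : ‖e‖^2 = 0 := by rw [hE]; ring
        rw [hE2, hf0]; ring
    · have hE2 : (0:ℝ) < ‖e‖^2 := by positivity
      refine ⟨s, ?_, hzx3, by nlinarith [h1sq']⟩
      nlinarith [h1sq', sq_nonneg ‖f‖, sq_nonneg (s-1)]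
  -- conclusion 1 : z ∈ U
  have hzU : z ∈ U := by
    have : z = σ • p + (1 - σ) • x := by
      have : z = x + σ • e := by rw [← hσe]; module
      rw [this, he]; module
    rw [this]
    exact hUaff p hpU x hxU σ
  refine ⟨hzU, ?_, ?_⟩
  -- conclusion 2 : Fejér
  · intro y hy hyU
    set u : EuclideanSpace ℝ (Fin n) := y - x with hu
    have hfu : (inner ℝ f u : ℝ) = 0 := by
      have h1' := crm_aux_orth hUaff hPU (R x) y hyU
      have h2' := crm_aux_orth hUaff hPU (R x) x hxU
      have : (inner ℝ f u : ℝ) = (inner ℝ (R x - p) (y - p) : ℝ) - (inner ℝ (R x - p) (x - p) : ℝ) := by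
        rw [hf, hu, ← inner_sub_right]
        congr 1
        module
      rw [this, h1', h2', sub_zero]
    have hne : ‖R x - y‖ ≤ ‖x - y‖ := crm_aux_Rnonexp hT hR x y hy
    have hRxy : R x - y = e + f - u := by
      rw [he, hf, hu]; module
    have hxy : x - y = -u := by rw [hu]; module
    have hnesq : ‖e + f - u‖^2 ≤ ‖u‖^2 := by
      have h' : ‖R x - y‖^2 ≤ ‖x - y‖^2 := by
        exact pow_le_pow_left₀ (norm_nonneg _) hne 2
      rw [hRxy, hxy, norm_neg] at h'
      exact h'
    have hexp1 : ‖e + f - u‖^2 = ‖e‖^2 + ‖f‖^2 + ‖u‖^2 - 2 * (inner ℝ e u : ℝ) := by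
      rw [norm_sub_sq_real, norm_add_sq_real, inner_add_left, hef, hfu]
      ring
    have heu : ‖e‖^2 + ‖f‖^2 ≤ 2 * (inner ℝ e u : ℝ) := by linarith [hnesq, hexp1]
    have hzy : z - y = σ • e - u := by
      rw [hu]
      have : z - y = (z - x) - (y - x) := by module
      rw [this, hσe]
    have hzysq : ‖z - y‖^2 = σ^2 * ‖e‖^2 - 2 * σ * (inner ℝ e u : ℝ) + ‖u‖^2 := by
      rw [hzy, norm_sub_sq_real, real_inner_smul_left, norm_smul, mul_pow,
        Real.norm_eq_abs, sq_abs]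
      ring
    have hzxsq : ‖z - x‖^2 = σ^2 * ‖e‖^2 := by
      rw [hσe, norm_smul, mul_pow, Real.norm_eq_abs, sq_abs]
    have hxysq : ‖x - y‖^2 = ‖u‖^2 := by rw [hxy, norm_neg]
    rw [hzysq, hzxsq, hxysq]
    have h5 : σ * (‖e‖^2 + ‖f‖^2) ≤ σ * (2 * (inner ℝ e u : ℝ)) :=
      mul_le_mul_of_nonneg_left heu hσ0
    have h6 : σ * (‖e‖^2 + ‖f‖^2) = 2 * σ^2 * ‖e‖^2 := by
      rw [← hσE]; ring
    linarith [h5, h6]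
  -- conclusion 3
  · have hid : z - R x = (z - x) - (2:ℝ) • (T x - x) := by rw [hR]; module
    exact crm_aux_mid (z - x) (T x - x) (by rw [← hid]; exact h1)

/-- Global convergence of the circumcentered-reflection method: if `Fix(T, P_U) ≠ ∅`
and `x⁰ ∈ U`, and each `x^{k+1}` is a circumcenter of `x^k`, `R(x^k)`, `R_U(R(x^k))`,
then the whole sequence stays in `U` and converges to a common fixed point of `T`
and `P_U`. -/
theorem crm_converges {n : ℕ}
    (T : EuclideanSpace ℝ (Fin n) → EuclideanSpace ℝ (Fin n))
    (hT : FirmlyNonexpansive T)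
    (U : Set (EuclideanSpace ℝ (Fin n))) (hUne : U.Nonempty)
    (hUaff : ∀ x ∈ U, ∀ y ∈ U, ∀ t : ℝ, t • x + (1 - t) • y ∈ U)
    (PU : EuclideanSpace ℝ (Fin n) → EuclideanSpace ℝ (Fin n))
    (hPU : IsProjOn U PU)
    (R RU : EuclideanSpace ℝ (Fin n) → EuclideanSpace ℝ (Fin n))
    (hR : ∀ w, R w = (2 : ℝ) • T w - w) (hRU : ∀ w, RU w = (2 : ℝ) • PU w - w)
    (hfix : ∃ y, T y = y ∧ y ∈ U)
    (x : ℕ → EuclideanSpace ℝ (Fin n)) (hx0 : x 0 ∈ U)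
    (hcirc : ∀ k, x (k + 1) ∈
        affineSpan ℝ ({x k, R (x k), RU (R (x k))} : Set (EuclideanSpace ℝ (Fin n))) ∧
      ‖x (k + 1) - x k‖ = ‖x (k + 1) - R (x k)‖ ∧
      ‖x (k + 1) - x k‖ = ‖x (k + 1) - RU (R (x k))‖) :
    (∀ k, x k ∈ U) ∧
      ∃ xbar, (T xbar = xbar ∧ xbar ∈ U) ∧
        Filter.Tendsto x Filter.atTop (nhds xbar) := by
  obtain ⟨ys, hys, hysU⟩ := hfix
  have hmem : ∀ k, x k ∈ U := by
    intro k
    induction k with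
    | zero => exact hx0
    | succ k ih =>
      exact (crm_step hT hUaff hPU hR hRU ih (hcirc k).1 (hcirc k).2.1 (hcirc k).2.2).1
  have hfej : ∀ y, T y = y → y ∈ U → ∀ k,
      ‖x (k+1) - y‖^2 + ‖x (k+1) - x k‖^2 ≤ ‖x k - y‖^2 := fun y hy hyU k =>
    (crm_step hT hUaff hPU hR hRU (hmem k) (hcirc k).1 (hcirc k).2.1 (hcirc k).2.2).2.1 y hy hyU
  have hTx : ∀ k, ‖T (x k) - x k‖ ≤ ‖x (k+1) - x k‖ := fun k =>
    (crm_step hT hUaff hPU hR hRU (hmem k) (hcirc k).1 (hcirc k).2.1 (hcirc k).2.2).2.2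
  have hstep1 : ∀ y, T y = y → y ∈ U → ∀ k, ‖x (k+1) - y‖ ≤ ‖x k - y‖ := by
    intro y hy hyU k
    refine sq_le_imp (norm_nonneg _) (norm_nonneg _) ?_
    have := hfej y hy hyU k
    nlinarith [sq_nonneg ‖x (k+1) - x k‖]
  have hdec : ∀ y, T y = y → y ∈ U → ∀ j k, j ≤ k → ‖x k - y‖ ≤ ‖x j - y‖ := by
    intro y hy hyU j k hjk
    induction hjk with
    | refl => exact le_refl _
    | step _ ih => exact le_trans (hstep1 y hy hyU _) ih
  set A : ℕ → ℝ := fun k => ‖x k - ys‖ with hA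
  have hanti : Antitone A := antitone_nat_of_succ_le (fun k => hstep1 ys hys hysU k)
  have hbdd : BddBelow (Set.range A) := ⟨0, by rintro r ⟨k, rfl⟩; exact norm_nonneg _⟩
  have hAlim : Tendsto A atTop (nhds (⨅ k, A k)) := tendsto_atTop_ciInf hanti hbdd
  set L := ⨅ k, A k with hL
  have hA2 : Tendsto (fun k => A k ^ 2) atTop (nhds (L^2)) := hAlim.pow 2
  have hA2' : Tendsto (fun k => A (k+1) ^ 2) atTop (nhds (L^2)) :=
    hA2.comp (tendsto_add_atTop_nat 1)
  have hdiff : Tendsto (fun k => A k ^ 2 - A (k+1) ^ 2) atTop (nhds 0) := by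
    have := hA2.sub hA2'
    rwa [sub_self] at this
  set d : ℕ → ℝ := fun k => ‖x (k+1) - x k‖ with hd
  have hd2 : Tendsto (fun k => d k ^ 2) atTop (nhds 0) := by
    refine squeeze_zero (fun k => sq_nonneg _) (fun k => ?_) hdiff
    have := hfej ys hys hysU k
    simp only [hA, hd]
    nlinarith [this]
  have hd0 : Tendsto d atTop (nhds 0) := by
    have h := (Real.continuous_sqrt.tendsto 0).comp hd2
    rw [Real.sqrt_zero] at h
    exact h.congr (fun k => Real.sqrt_sq (norm_nonneg _))
  have hTto : Tendsto (fun k => ‖T (x k) - x k‖) atTop (nhds 0) :=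
    squeeze_zero (fun k => norm_nonneg _) hTx hd0
  -- boundedness and subsequence
  have hball : ∀ k, x k ∈ Metric.closedBall ys (A 0) := by
    intro k
    rw [Metric.mem_closedBall, dist_eq_norm]
    exact hdec ys hys hysU 0 k (Nat.zero_le k)
  obtain ⟨xb, -, φ, hφ, hconv⟩ :=
    tendsto_subseq_of_bounded (Metric.isBounded_closedBall (x := ys) (r := A 0)) hball
  have hxbU : xb ∈ U :=
    (crm_aux_closed U hUne hUaff).mem_of_tendsto hconv
      (Filter.Eventually.of_forall (fun j => hmem (φ j)))
  have hsub0 : Tendsto (fun j => ‖x (φ j) - xb‖) atTop (nhds 0) :=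
    tendsto_iff_norm_sub_tendsto_zero.mp hconv
  have hTxb : T xb = xb := by
    have h1 : Tendsto (fun j => T (x (φ j))) atTop (nhds (T xb)) := by
      rw [tendsto_iff_norm_sub_tendsto_zero]
      refine squeeze_zero (fun j => norm_nonneg _) (fun j => crm_aux_Tnonexp hT _ _) hsub0
    have h2 : Tendsto (fun j => ‖T (x (φ j)) - x (φ j)‖) atTop (nhds ‖T xb - xb‖) :=
      (h1.sub hconv).norm
    have h3 : Tendsto (fun j => ‖T (x (φ j)) - x (φ j)‖) atTop (nhds 0) :=
      hTto.comp hφ.tendsto_atTop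
    have := tendsto_nhds_unique h2 h3
    rwa [norm_eq_zero, sub_eq_zero] at this
  refine ⟨hmem, xb, ⟨hTxb, hxbU⟩, ?_⟩
  rw [Metric.tendsto_atTop]
  intro ε hε
  obtain ⟨N, hN⟩ := (Metric.tendsto_atTop.mp hsub0) ε hε
  refine ⟨φ N, fun k hk => ?_⟩
  have h1 : ‖x (φ N) - xb‖ < ε := by
    have := hN N (le_refl N)
    rwa [Real.dist_eq, sub_zero, abs_of_nonneg (norm_nonneg _)] at this
  calc dist (x k) xb = ‖x k - xb‖ := dist_eq_norm _ _
    _ ≤ ‖x (φ N) - xb‖ := hdec xb hTxb hxbU (φ N) k hk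
    _ < ε := h1
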